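/- Let w₁ ≥ 0, w₂ > 0, c > 0 be reals, let 0 < σ₁ ≤ σ₂ ≤ c, let μ₁, μ₂, x ∈ ℝ, and let π₁, π₂ ≥ 0 with π₁ + π₂ = 1. Set w₃ = w₂(σ₂² + (μ₁ − μ₂)²) and w₄ = 1 + w₂. Then log( π₁ φ(x; μ₁, σ₁) + π₂ φ(x; μ₂, σ₂) ) − w₁ KL(N(μ₁,σ₁²), N(μ₂,σ₂²)) − w₂ KL(N(μ₂,σ₂²), N(μ₁,σ₁²)) ≤ −(w₄/2) log(w₃/w₄) − w₄/2 + w₂ log c + (w₁ + w₂)/2. -/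

import Mathlib

open Real

/-- Univariate Gaussian density `φ(x; μ, σ) = (1/(√(2π) σ)) exp(−(x−μ)²/(2σ²))`. -/
noncomputable def phi (x μ σ : ℝ) : ℝ :=
  (1 / (Real.sqrt (2 * Real.pi) * σ)) * Real.exp (-(x - μ) ^ 2 / (2 * σ ^ 2))

/-- Closed form of the KL divergence between the univariate Gaussians
`N(μ₁, σ₁²)` and `N(μ₂, σ₂²)`:
`KL = log(σ₂/σ₁) + (σ₁² + (μ₁−μ₂)²)/(2σ₂²) − 1/2`. -/
noncomputable def klUni (μ₁ σ₁ μ₂ σ₂ : ℝ) : ℝ :=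
  Real.log (σ₂ / σ₁) + (σ₁ ^ 2 + (μ₁ - μ₂) ^ 2) / (2 * σ₂ ^ 2) - 1 / 2

lemma key_opt (a b t : ℝ) (ha : 0 < a) (hb : 0 < b) (ht : 0 < t) :
    -(a / 2) * Real.log t - b / (2 * t) ≤ -(a / 2) * Real.log (b / a) - a / 2 := by
  have h1 : Real.log (b / (a * t)) ≤ b / (a * t) - 1 :=
    Real.log_le_sub_one_of_pos (by positivity)
  have h2 : Real.log (b / (a * t)) = Real.log b - Real.log a - Real.log t := by
    rw [Real.log_div hb.ne' (by positivity), Real.log_mul ha.ne' ht.ne']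
    ring
  have h3 : Real.log (b / a) = Real.log b - Real.log a := Real.log_div hb.ne' ha.ne'
  rw [h2] at h1
  rw [h3]
  have h4 : a * (Real.log b - Real.log a - Real.log t) ≤ b / t - a := by
    have h5 := mul_le_mul_of_nonneg_left h1 ha.le
    have h6 : a * (b / (a * t) - 1) = b / t - a := by field_simp
    linarith [h6 ▸ h5]
  have h7 : b / (2 * t) = (b / t) / 2 := by ring
  linarith [h4]

theorem univariate_penalized_bound (w₁ w₂ c : ℝ) (hw₁ : 0 ≤ w₁) (hw₂ : 0 < w₂) (hc : 0 < c)
    (σ₁ σ₂ : ℝ) (hσ₁ : 0 < σ₁) (hσ₁₂ : σ₁ ≤ σ₂) (hσ₂c : σ₂ ≤ c)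
    (μ₁ μ₂ x : ℝ) (π₁ π₂ : ℝ) (hπ₁ : 0 ≤ π₁) (hπ₂ : 0 ≤ π₂) (hπ : π₁ + π₂ = 1) :
    Real.log (π₁ * phi x μ₁ σ₁ + π₂ * phi x μ₂ σ₂)
      - w₁ * klUni μ₁ σ₁ μ₂ σ₂ - w₂ * klUni μ₂ σ₂ μ₁ σ₁ ≤
      -((1 + w₂) / 2) * Real.log ((w₂ * (σ₂ ^ 2 + (μ₁ - μ₂) ^ 2)) / (1 + w₂))
        - (1 + w₂) / 2 + w₂ * Real.log c + (w₁ + w₂) / 2 := by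
  have hσ₂ : 0 < σ₂ := lt_of_lt_of_le hσ₁ hσ₁₂
  set D : ℝ := σ₂ ^ 2 + (μ₁ - μ₂) ^ 2 with hD
  have hDpos : 0 < D := by positivity
  have hsqrt : (1 : ℝ) ≤ Real.sqrt (2 * Real.pi) := by
    rw [show (1 : ℝ) = Real.sqrt 1 by simp]
    apply Real.sqrt_le_sqrt
    nlinarith [Real.pi_gt_three]
  have hsqrtpos : 0 < Real.sqrt (2 * Real.pi) := by positivity
  -- phi bounds
  have hphi_pos : ∀ μ σ : ℝ, 0 < σ → 0 < phi x μ σ := by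
    intro μ σ hσ
    unfold phi
    positivity
  have hphi_le : ∀ μ σ : ℝ, 0 < σ → phi x μ σ ≤ 1 / (Real.sqrt (2 * Real.pi) * σ) := by
    intro μ σ hσ
    unfold phi
    have hexp : Real.exp (-(x - μ) ^ 2 / (2 * σ ^ 2)) ≤ 1 := by
      rw [Real.exp_le_one_iff]
      apply div_nonpos_of_nonpos_of_nonneg
      · exact neg_nonpos_of_nonneg (sq_nonneg _)
      · positivity
    have hA : (0:ℝ) ≤ 1 / (Real.sqrt (2 * Real.pi) * σ) := by positivity
    nlinarith
  -- mixture bound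
  have hmixpos : 0 < π₁ * phi x μ₁ σ₁ + π₂ * phi x μ₂ σ₂ := by
    rcases lt_or_eq_of_le hπ₁ with h | h
    · exact add_pos_of_pos_of_nonneg (mul_pos h (hphi_pos μ₁ σ₁ hσ₁))
        (mul_nonneg hπ₂ (hphi_pos μ₂ σ₂ hσ₂).le)
    · have hπ₂1 : π₂ = 1 := by linarith
      rw [← h, hπ₂1]
      simpa using hphi_pos μ₂ σ₂ hσ₂
  have hmixle : π₁ * phi x μ₁ σ₁ + π₂ * phi x μ₂ σ₂ ≤ 1 / (Real.sqrt (2 * Real.pi) * σ₁) := by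
    have h1 := hphi_le μ₁ σ₁ hσ₁
    have h2 := hphi_le μ₂ σ₂ hσ₂
    have h3 : 1 / (Real.sqrt (2 * Real.pi) * σ₂) ≤ 1 / (Real.sqrt (2 * Real.pi) * σ₁) := by
      apply one_div_le_one_div_of_le (by positivity)
      nlinarith
    nlinarith [mul_le_mul_of_nonneg_left h1 hπ₁, mul_le_mul_of_nonneg_left (h2.trans h3) hπ₂]
  have hmix : Real.log (π₁ * phi x μ₁ σ₁ + π₂ * phi x μ₂ σ₂) ≤ -Real.log σ₁ := by
    calc Real.log (π₁ * phi x μ₁ σ₁ + π₂ * phi x μ₂ σ₂)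
        ≤ Real.log (1 / (Real.sqrt (2 * Real.pi) * σ₁)) := Real.log_le_log hmixpos hmixle
      _ = -(Real.log (Real.sqrt (2 * Real.pi)) + Real.log σ₁) := by
          rw [one_div, Real.log_inv, Real.log_mul hsqrtpos.ne' hσ₁.ne']
      _ ≤ -Real.log σ₁ := by
          have : 0 ≤ Real.log (Real.sqrt (2 * Real.pi)) := Real.log_nonneg hsqrt
          linarith
  -- KL₁₂ ≥ -1/2
  have hKL12 : -(1/2 : ℝ) ≤ klUni μ₁ σ₁ μ₂ σ₂ := by
    unfold klUni
    have hlog : 0 ≤ Real.log (σ₂ / σ₁) := Real.log_nonneg (by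
      rw [le_div_iff₀ hσ₁]; linarith)
    have hq : 0 ≤ (σ₁ ^ 2 + (μ₁ - μ₂) ^ 2) / (2 * σ₂ ^ 2) := by positivity
    linarith
  have hKL12' : -(w₁ * klUni μ₁ σ₁ μ₂ σ₂) ≤ w₁ / 2 := by
    nlinarith [mul_le_mul_of_nonneg_left hKL12 hw₁]
  -- KL₂₁ expansion
  have hKL21 : klUni μ₂ σ₂ μ₁ σ₁
      = Real.log σ₁ - Real.log σ₂ + D / (2 * σ₁ ^ 2) - 1 / 2 := by
    unfold klUni
    rw [Real.log_div hσ₁.ne' hσ₂.ne']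
    rw [hD]
    ring_nf
  -- σ₂ ≤ c
  have hlogc : w₂ * Real.log σ₂ ≤ w₂ * Real.log c :=
    mul_le_mul_of_nonneg_left (Real.log_le_log hσ₂ hσ₂c) hw₂.le
  -- key optimization
  have hkey := key_opt (1 + w₂) (w₂ * D) (σ₁ ^ 2) (by linarith) (by positivity) (by positivity)
  have hlogsq : Real.log (σ₁ ^ 2) = 2 * Real.log σ₁ := by
    rw [Real.log_pow]; push_cast; ring
  rw [hlogsq] at hkey
  rw [hKL21]
  have hatom : w₂ * (D / (2 * σ₁ ^ 2)) = w₂ * D / (2 * σ₁ ^ 2) := by ring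
  nlinarith [hkey, hmix, hKL12', hlogc, hatom]
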